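/- There exists a group homomorphism ϑ : Γ₁(3) → ℂˣ with ϑ([[1,0],[-3,1]]) = ϑ([[1,1],[0,1]]) = exp(πi/3); moreover ϑ⁶ is trivial and ϑ³ takes the value -1 on both generators. -/

import Mathlib

open Matrix

/-- `A = [[1,0],[-3,1]]` in `SL(2, ℤ)`. -/
def A : Matrix.SpecialLinearGroup (Fin 2) ℤ :=
  ⟨!![1, 0; -3, 1], by norm_num [Matrix.det_fin_two_of]⟩

/-- `B = [[1,1],[0,1]]` in `SL(2, ℤ)`. -/
def B : Matrix.SpecialLinearGroup (Fin 2) ℤ :=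
  ⟨!![1, 1; 0, 1], by norm_num [Matrix.det_fin_two_of]⟩

theorem A_mem_Gamma1_three : A ∈ CongruenceSubgroup.Gamma1 3 := by
  rw [CongruenceSubgroup.Gamma1_mem]; refine ⟨?_, ?_, ?_⟩ <;> decide

theorem B_mem_Gamma1_three : B ∈ CongruenceSubgroup.Gamma1 3 := by
  rw [CongruenceSubgroup.Gamma1_mem]; refine ⟨?_, ?_, ?_⟩ <;> decide

namespace Gamma1ThreeChar

instance : DecidableEq (Matrix.SpecialLinearGroup (Fin 2) (ZMod 2)) :=
  fun a b => decidable_of_iff (a.1 = b.1) Subtype.ext_iff.symm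

instance : Fintype (Matrix.SpecialLinearGroup (Fin 2) (ZMod 2)) :=
  Subtype.fintype _

/-- The sign character of `SL(2, ℤ/2) ≅ S₃`, written additively into `ℤ/2`. -/
def sgn : Matrix.SpecialLinearGroup (Fin 2) (ZMod 2) →* Multiplicative (ZMod 2) where
  toFun M := Multiplicative.ofAdd (if M.1 0 0 + M.1 1 1 = 1 ∨ M = 1 then 0 else 1)
  map_one' := by decide
  map_mul' := by decide

/-- Reduction mod 2. -/
def red : Matrix.SpecialLinearGroup (Fin 2) ℤ →* Matrix.SpecialLinearGroup (Fin 2) (ZMod 2) :=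
  Matrix.SpecialLinearGroup.map (Int.castRingHom (ZMod 2))

/-- The mod-3 additive exponent `b - c/3` on `Γ₁(3)`. -/
def hexp (g : CongruenceSubgroup.Gamma1 3) : ZMod 3 :=
  ((g.1.1 0 1 - (g.1.1 1 0)/3 : ℤ) : ZMod 3)

lemma cast_eq_of_dvd (a b : ℤ) (hab : (3:ℤ) ∣ a - b) : ((a : ZMod 3) = (b : ZMod 3)) := by
  have := (ZMod.intCast_zmod_eq_zero_iff_dvd (a - b) 3).2 (by exact_mod_cast hab)
  push_cast at this
  linear_combination this

lemma dvd_of_mem (γ : Matrix.SpecialLinearGroup (Fin 2) ℤ) (hγ : γ ∈ CongruenceSubgroup.Gamma1 3) :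
    (3:ℤ) ∣ γ.1 0 0 - 1 ∧ (3:ℤ) ∣ γ.1 1 1 - 1 ∧ (3:ℤ) ∣ γ.1 1 0 := by
  rw [CongruenceSubgroup.Gamma1_mem] at hγ
  refine ⟨?_, ?_, ?_⟩
  · have h0 : ((γ.1 0 0 - 1 : ℤ) : ZMod 3) = 0 := by push_cast; rw [hγ.1]; ring
    exact_mod_cast (ZMod.intCast_zmod_eq_zero_iff_dvd _ 3).1 h0
  · have h0 : ((γ.1 1 1 - 1 : ℤ) : ZMod 3) = 0 := by push_cast; rw [hγ.2.1]; ring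
    exact_mod_cast (ZMod.intCast_zmod_eq_zero_iff_dvd _ 3).1 h0
  · have h0 : ((γ.1 1 0 : ℤ) : ZMod 3) = 0 := by rw [hγ.2.2]
    exact_mod_cast (ZMod.intCast_zmod_eq_zero_iff_dvd _ 3).1 h0

lemma hexp_mul (g h : CongruenceSubgroup.Gamma1 3) : hexp (g * h) = hexp g + hexp h := by
  obtain ⟨⟨x, hx⟩, ⟨w, hw⟩, ⟨u, hu⟩⟩ := dvd_of_mem g.1 g.2
  obtain ⟨⟨v, hv⟩, ⟨y, hy⟩, ⟨z, hz⟩⟩ := dvd_of_mem h.1 h.2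
  have e1 : g.1.1 0 0 = 3*x + 1 := by omega
  have e2 : g.1.1 1 1 = 3*w + 1 := by omega
  have e3 : g.1.1 1 0 = 3*u := by omega
  have e4 : h.1.1 0 0 = 3*v + 1 := by omega
  have e5 : h.1.1 1 1 = 3*y + 1 := by omega
  have e6 : h.1.1 1 0 = 3*z := by omega
  show (((g.1.1 * h.1.1) 0 1 - ((g.1.1 * h.1.1) 1 0)/3 : ℤ) : ZMod 3) = _
  unfold hexp
  simp only [Matrix.mul_apply, Fin.sum_univ_two]
  rw [e1, e2, e3, e4, e5, e6]
  rw [show (3*u)*(3*v+1) + (3*w+1)*(3*z) = 3*(u*(3*v+1) + (3*w+1)*z) by ring,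
    Int.mul_ediv_cancel_left _ (by norm_num), Int.mul_ediv_cancel_left _ (by norm_num),
    Int.mul_ediv_cancel_left _ (by norm_num)]
  rw [← Int.cast_add]
  refine cast_eq_of_dvd _ _ ⟨x * h.1.1 0 1 + g.1.1 0 1 * y - u*v - w*z, by ring⟩

/-- The cube root of unity `exp(-2πi/3)` as a unit. -/
noncomputable def u3 : ℂˣ :=
  Units.mk0 (Complex.exp (-(2*Real.pi*Complex.I)/3)) (Complex.exp_ne_zero _)

lemma u3_pow3 : u3 ^ 3 = 1 := by
  have : (u3 : ℂ) ^ 3 = 1 := by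
    show (Complex.exp _) ^ 3 = 1
    rw [← Complex.exp_nat_mul,
      show ((3:ℕ):ℂ) * (-(2*(Real.pi:ℂ)*Complex.I)/3) = -(2*(Real.pi:ℂ)*Complex.I) by
        push_cast; ring,
      Complex.exp_neg, Complex.exp_two_pi_mul_I, inv_one]
  ext
  push_cast
  exact this

lemma neg_one_pow_two : ((-1 : ℂˣ)) ^ 2 = 1 := by
  ext; push_cast; ring

/-- The order-3 character. -/
noncomputable def χ3 : (CongruenceSubgroup.Gamma1 3) →* ℂˣ where
  toFun g := u3 ^ (hexp g).val
  map_one' := by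
    show u3 ^ (hexp 1).val = 1
    have : hexp 1 = 0 := by decide
    rw [this]; simp
  map_mul' g h := by
    have key : ∀ a : ℕ, u3 ^ (a % 3) = u3 ^ a := by
      intro a
      conv_rhs => rw [← Nat.mod_add_div a 3]
      rw [pow_add, pow_mul, u3_pow3, one_pow, mul_one]
    show u3 ^ (hexp (g * h)).val = u3 ^ (hexp g).val * u3 ^ (hexp h).val
    rw [hexp_mul, ZMod.val_add, key, pow_add]

/-- The order-2 character. -/
noncomputable def χ2 : (CongruenceSubgroup.Gamma1 3) →* ℂˣ where
  toFun g := (-1 : ℂˣ) ^ ((sgn (red g.1)).toAdd).val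
  map_one' := by
    show (-1 : ℂˣ) ^ ((sgn (red (1 : CongruenceSubgroup.Gamma1 3).1)).toAdd).val = 1
    have : ((sgn (red (1 : CongruenceSubgroup.Gamma1 3).1)).toAdd).val = 0 := by decide
    rw [this]; simp
  map_mul' g h := by
    have key : ∀ a : ℕ, (-1 : ℂˣ) ^ (a % 2) = (-1 : ℂˣ) ^ a := by
      intro a
      conv_rhs => rw [← Nat.mod_add_div a 2]
      rw [pow_add, pow_mul, neg_one_pow_two, one_pow, mul_one]
    show (-1 : ℂˣ) ^ ((sgn (red (g * h).1)).toAdd).val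
      = (-1 : ℂˣ) ^ ((sgn (red g.1)).toAdd).val * (-1 : ℂˣ) ^ ((sgn (red h.1)).toAdd).val
    have hcoe : ((g * h : CongruenceSubgroup.Gamma1 3) : Matrix.SpecialLinearGroup (Fin 2) ℤ)
        = g.1 * h.1 := rfl
    rw [hcoe, _root_.map_mul, _root_.map_mul, toAdd_mul, ZMod.val_add, key, pow_add]

end Gamma1ThreeChar

open Gamma1ThreeChar in
/-- There is a character `ϑ : Γ₁(3) → ℂˣ` with `ϑ(A) = ϑ(B) = exp(πi/3)`;
`ϑ⁶` is trivial and `ϑ³` takes the value `-1` on both generators. -/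
theorem exists_character_Gamma1_three :
    ∃ ϑ : (CongruenceSubgroup.Gamma1 3) →* ℂˣ,
      (ϑ ⟨A, A_mem_Gamma1_three⟩ : ℂ) = Complex.exp (Real.pi * Complex.I / 3) ∧
      (ϑ ⟨B, B_mem_Gamma1_three⟩ : ℂ) = Complex.exp (Real.pi * Complex.I / 3) ∧
      (∀ g, (ϑ g) ^ 6 = 1) ∧
      ((ϑ ⟨A, A_mem_Gamma1_three⟩ : ℂ) ^ 3 = -1) ∧
      ((ϑ ⟨B, B_mem_Gamma1_three⟩ : ℂ) ^ 3 = -1) := by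
  refine ⟨χ2 * χ3, ?_⟩
  set aA : CongruenceSubgroup.Gamma1 3 := ⟨A, A_mem_Gamma1_three⟩
  set aB : CongruenceSubgroup.Gamma1 3 := ⟨B, B_mem_Gamma1_three⟩
  have hA2 : ((sgn (red aA.1)).toAdd).val = 1 := by decide
  have hB2 : ((sgn (red aB.1)).toAdd).val = 1 := by decide
  have hA3 : (hexp aA).val = 1 := by decide
  have hB3 : (hexp aB).val = 1 := by decide
  have hval : ∀ c : CongruenceSubgroup.Gamma1 3,
      ((sgn (red c.1)).toAdd).val = 1 → (hexp c).val = 1 →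
      (((χ2 * χ3) c : ℂˣ) : ℂ) = Complex.exp (Real.pi * Complex.I / 3) := by
    intro c h2 h3
    have : ((χ2 * χ3) c : ℂˣ) = (-1) * u3 := by
      show (-1 : ℂˣ) ^ ((sgn (red c.1)).toAdd).val * u3 ^ (hexp c).val = (-1) * u3
      rw [h2, h3, pow_one, pow_one]
    rw [this]
    push_cast
    have harg : (Real.pi : ℂ) * Complex.I / 3
        = (Real.pi : ℂ) * Complex.I + (-(2*(Real.pi:ℂ)*Complex.I)/3) := by ring
    rw [harg, Complex.exp_add, Complex.exp_pi_mul_I]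
    show (-1) * (u3 : ℂ) = -1 * Complex.exp _
    norm_num [u3]
  have hvA := hval aA hA2 hA3
  have hvB := hval aB hB2 hB3
  refine ⟨hvA, hvB, ?_, ?_, ?_⟩
  · intro g
    show ((-1 : ℂˣ) ^ ((sgn (red g.1)).toAdd).val * u3 ^ (hexp g).val) ^ 6 = 1
    have h1 : ((-1 : ℂˣ) ^ ((sgn (red g.1)).toAdd).val) ^ 6 = 1 := by
      rw [← pow_mul, show ((sgn (red g.1)).toAdd).val * 6 = 2 * (((sgn (red g.1)).toAdd).val * 3) by ring,
        pow_mul, neg_one_pow_two, one_pow]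
    have h2 : (u3 ^ (hexp g).val) ^ 6 = 1 := by
      rw [← pow_mul, show (hexp g).val * 6 = 3 * ((hexp g).val * 2) by ring,
        pow_mul, u3_pow3, one_pow]
    rw [mul_pow, h1, h2, one_mul]
  · rw [hvA, ← Complex.exp_nat_mul,
      show ((3:ℕ):ℂ) * ((Real.pi:ℂ) * Complex.I / 3) = (Real.pi:ℂ) * Complex.I by
        push_cast; ring, Complex.exp_pi_mul_I]
  · rw [hvB, ← Complex.exp_nat_mul,
      show ((3:ℕ):ℂ) * ((Real.pi:ℂ) * Complex.I / 3) = (Real.pi:ℂ) * Complex.I by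
        push_cast; ring, Complex.exp_pi_mul_I]
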